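/- Given any coinfinite primitive recursive set Y, there exists a coinfinite primitive recursive set X such that R_X <_pr R_Y and the pair (X,Y) does not satisfy the ♦-property. (In particular, given any total computable function F there is a coinfinite primitive recursive X with p_{\bar X}(n) ≥ F(n) for all n.) -/

import Mathlib

/-- The equivalence relation `R_X`: `x R_X y` iff both in `X` or `x = y`. -/
def REq (X : Set ℕ) (x y : ℕ) : Prop := (x ∈ X ∧ y ∈ X) ∨ x = y

/-- Primitive recursive reducibility between binary relations on ℕ. -/
def PrRed (R S : ℕ → ℕ → Prop) : Prop :=
  ∃ f : ℕ → ℕ, Primrec f ∧ ∀ x y, R x y ↔ S (f x) (f y)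

/-- pr-bireducibility. -/
def PrEquiv (R S : ℕ → ℕ → Prop) : Prop := PrRed R S ∧ PrRed S R

/-- `X` is a primitive recursive set. -/
def PRSet (X : Set ℕ) : Prop :=
  ∃ f : ℕ → Bool, Primrec f ∧ ∀ n, n ∈ X ↔ f n = true

/-- `#(0^X)[s]`: the number of elements of the complement of `X` that are `≤ s`. -/
noncomputable def zc (X : Set ℕ) (s : ℕ) : ℕ := {k | k ≤ s ∧ k ∉ X}.ncard

/-- The ♦-property for a pair of sets. -/
def DiamondProp (X Y : Set ℕ) : Prop :=
  ∃ X' Y' : Set ℕ, PRSet X' ∧ PRSet Y' ∧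
    PrEquiv (REq X') (REq X) ∧ PrEquiv (REq Y') (REq Y) ∧
    ∀ s, ∃ t, s ≤ t ∧ zc X' t = zc Y' t

/-- The increasing enumeration of the complement of `U`. -/
noncomputable def penum (U : Set ℕ) (n : ℕ) : ℕ := Nat.nth (fun k => k ∉ U) n

open Finset in
lemma zc_eq_card (X : Set ℕ) [DecidablePred (· ∈ X)] (s : ℕ) :
    zc X s = ((Finset.range (s+1)).filter (fun k => k ∉ X)).card := by
  rw [zc, ← Set.ncard_coe_finset]
  congr 1
  ext k
  simp [Nat.lt_succ_iff]

lemma zc_mono (X : Set ℕ) : Monotone (zc X) := by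
  classical
  intro a b hab
  rw [zc_eq_card, zc_eq_card]
  apply Finset.card_le_card
  apply Finset.filter_subset_filter
  exact Finset.range_subset_range.2 (by omega)

lemma zc_le (X : Set ℕ) (s : ℕ) : zc X s ≤ s + 1 := by
  classical
  rw [zc_eq_card]
  calc _ ≤ (Finset.range (s+1)).card := Finset.card_filter_le _ _
  _ = s + 1 := Finset.card_range _

lemma zc_eq_count (X : Set ℕ) [DecidablePred (· ∈ X)] (s : ℕ) :
    zc X s = Nat.count (fun k => k ∉ X) (s+1) := by
  rw [zc_eq_card, Nat.count_eq_card_filter_range]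

section
variable {X : Set ℕ} (hX : Xᶜ.Infinite)
include hX

lemma penum_not_mem (n : ℕ) : penum X n ∉ X := Nat.nth_mem_of_infinite hX n

lemma penum_strictMono : StrictMono (penum X) := Nat.nth_strictMono hX

lemma le_penum (n : ℕ) : n ≤ penum X n := (penum_strictMono hX).le_apply

lemma zc_penum (n : ℕ) : zc X (penum X n) = n + 1 := by
  classical
  rw [zc_eq_count, penum, Nat.count_succ, Nat.count_nth_of_infinite hX]
  simp [show Nat.nth (fun k => k ∉ X) n ∉ X from penum_not_mem hX n]

omit hX in
lemma penum_zc {s : ℕ} (hs : s ∉ X) : penum X (zc X s - 1) = s := by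
  classical
  have h1 : zc X s = Nat.count (fun k => k ∉ X) s + 1 := by
    rw [zc_eq_count, Nat.count_succ]; simp [hs]
  rw [h1]
  simpa [penum] using Nat.nth_count (p := fun k => k ∉ X) hs

lemma lt_penum_zc (s : ℕ) : s < penum X (zc X s) := by
  by_contra h
  push_neg at h
  have := zc_mono X h
  rw [zc_penum hX] at this
  omega

lemma zc_large {C s : ℕ} (hs : penum X C ≤ s) : C + 1 ≤ zc X s := by
  have := zc_mono X hs
  rw [zc_penum hX] at this
  omega

end

lemma zc_zero_mem (X : Set ℕ) (h : 0 ∈ X) : zc X 0 = 0 := by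
  classical rw [zc_eq_count, Nat.count_succ, Nat.count_zero]; simp [h]

lemma zc_zero_not_mem (X : Set ℕ) (h : 0 ∉ X) : zc X 0 = 1 := by
  classical rw [zc_eq_count, Nat.count_succ, Nat.count_zero]; simp [h]

lemma zc_succ_mem (X : Set ℕ) {s : ℕ} (h : (s+1) ∈ X) : zc X (s+1) = zc X s := by
  classical rw [zc_eq_count, zc_eq_count, Nat.count_succ]; simp [h]

lemma zc_succ_not_mem (X : Set ℕ) {s : ℕ} (h : (s+1) ∉ X) : zc X (s+1) = zc X s + 1 := by
  classical rw [zc_eq_count, zc_eq_count, Nat.count_succ]; simp [h]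

lemma primrec_zc {X : Set ℕ} (hX : PRSet X) :
    ∃ c : ℕ → ℕ, Primrec c ∧ ∀ s, c s = zc X s := by
  obtain ⟨χ, hχ, hiff⟩ := hX
  have hfalse : ∀ n, n ∉ X → χ n = false := by
    intro n h
    cases h2 : χ n
    · rfl
    · exact absurd ((hiff n).2 h2) h
  refine ⟨fun s => Nat.rec (bif χ 0 then 0 else 1)
    (fun n ih => ih + (bif χ (n+1) then 0 else 1)) s, ?_, ?_⟩
  · apply Primrec.nat_rec₁
    exact (Primrec.nat_add.comp Primrec.snd
      ((Primrec.cond (hχ.comp (Primrec.succ.comp Primrec.fst))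
        (Primrec.const 0) (Primrec.const 1)))).to₂
  · intro s
    induction s with
    | zero =>
      by_cases h : (0:ℕ) ∈ X
      · simp [(hiff 0).1 h, zc_zero_mem X h]
      · simp [hfalse 0 h, zc_zero_not_mem X h]
    | succ n ih =>
      by_cases h : (n+1) ∈ X
      · simp [(hiff (n+1)).1 h, zc_succ_mem X h, ih]
      · simp [hfalse _ h, zc_succ_not_mem X h, ih]

lemma exists_mono_majorant {f : ℕ → ℕ} (hf : Primrec f) :
    ∃ g : ℕ → ℕ, Primrec g ∧ Monotone g ∧ ∀ s, f s ≤ g s := by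
  refine ⟨fun s => Nat.rec (f 0) (fun n ih => max ih (f (n+1))) s, ?_, ?_, ?_⟩
  · apply Primrec.nat_rec₁
    exact (Primrec.nat_max.comp Primrec.snd (hf.comp (Primrec.succ.comp Primrec.fst))).to₂
  · apply monotone_nat_of_le_succ
    intro n
    exact le_max_left _ _
  · intro s
    induction s with
    | zero => exact le_refl _
    | succ n _ => exact le_max_right _ _

lemma claimA {A B : Set ℕ} (hred : PrRed (REq A) (REq B)) :
    ∃ h : ℕ → ℕ, Primrec h ∧ Monotone h ∧ ∀ s, zc A s ≤ zc B (h s) + 1 := by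
  classical
  obtain ⟨f, hf, hr⟩ := hred
  obtain ⟨g, hg, gmono, gmaj⟩ := exists_mono_majorant hf
  refine ⟨g, hg, gmono, fun s => ?_⟩
  set SA := (Finset.range (s+1)).filter (fun k => k ∉ A) with hSA
  have hinj : Set.InjOn f SA := by
    intro k hk k' hk' hfk
    by_contra hne
    have hkA : k ∉ A := by simp [hSA] at hk; exact hk.2
    have : ¬ REq A k k' := by
      rintro (⟨h1, _⟩ | h2)
      exacts [hkA h1, hne h2]
    have : ¬ REq B (f k) (f k') := fun h => this ((hr k k').2 h)
    exact this (Or.inr hfk)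
  set T := SA.image f with hT
  have hcardT : T.card = SA.card := Finset.card_image_of_injOn hinj
  have hTsub : T ⊆ Finset.range (g s + 1) := by
    intro x hx
    rw [hT, Finset.mem_image] at hx
    obtain ⟨k, hk, rfl⟩ := hx
    have hks : k ≤ s := by simp [hSA, Nat.lt_succ_iff] at hk; exact hk.1
    have : f k ≤ g s := le_trans (gmaj k) (gmono hks)
    simp [Nat.lt_succ_iff, this]
  have hone : (T.filter (fun x => x ∈ B)).card ≤ 1 := by
    rw [Finset.card_le_one]
    intro x hx y hy
    rw [Finset.mem_filter, hT, Finset.mem_image] at hx hy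
    obtain ⟨⟨k, hk, rfl⟩, hxB⟩ := hx
    obtain ⟨⟨k', hk', rfl⟩, hyB⟩ := hy
    have : REq A k k' := (hr k k').2 (Or.inl ⟨hxB, hyB⟩)
    rcases this with ⟨h1, _⟩ | rfl
    · exact absurd h1 (by simp [hSA] at hk; exact hk.2)
    · rfl
  have hsplit : (T.filter (fun x => x ∈ B)).card + (T.filter (fun x => x ∉ B)).card = T.card :=
    Finset.card_filter_add_card_filter_not _
  have hsub2 : T.filter (fun x => x ∉ B) ⊆ (Finset.range (g s + 1)).filter (fun k => k ∉ B) := by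
    apply Finset.filter_subset_filter
    exact hTsub
  have hb : (T.filter (fun x => x ∉ B)).card ≤ zc B (g s) := by
    rw [zc_eq_card]
    exact Finset.card_le_card hsub2
  have final : SA.card ≤ zc B (g s) + 1 := by omega
  rw [zc_eq_card]
  exact final

section AckMachine
open Nat
def ackStep : List ℕ → List ℕ :=
  fun l => List.casesOn l [] (fun n t1 =>
    List.casesOn t1 [n] (fun m t =>
      Nat.casesOn m ((n+1) :: t) (fun m' =>
        Nat.casesOn n (1 :: m' :: t) (fun n' => n' :: (m'+1) :: m' :: t))))

lemma ackStep_single (v : ℕ) : ackStep [v] = [v] := rfl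
lemma ackStep_zero (n : ℕ) (t : List ℕ) : ackStep (n :: 0 :: t) = (n+1) :: t := rfl
lemma ackStep_succ_zero (m : ℕ) (t : List ℕ) : ackStep (0 :: (m+1) :: t) = 1 :: m :: t := rfl
lemma ackStep_succ_succ (m n : ℕ) (t : List ℕ) :
    ackStep ((n+1) :: (m+1) :: t) = n :: (m+1) :: m :: t := rfl

lemma primrec_ackStep : Primrec ackStep := by
  have inner2 : Primrec (fun p : ℕ × ℕ × List ℕ =>
      Nat.casesOn (motive := fun _ => List ℕ) p.1 (1 :: p.2.1 :: p.2.2)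
        (fun n' => n' :: (p.2.1+1) :: p.2.1 :: p.2.2)) := by
    apply Primrec.nat_casesOn Primrec.fst
    · exact Primrec.list_cons.comp (Primrec.const 1)
        (Primrec.list_cons.comp (Primrec.fst.comp Primrec.snd) (Primrec.snd.comp Primrec.snd))
    · exact (Primrec.list_cons.comp Primrec.snd
        (Primrec.list_cons.comp (Primrec.succ.comp (Primrec.fst.comp (Primrec.snd.comp Primrec.fst)))
          (Primrec.list_cons.comp (Primrec.fst.comp (Primrec.snd.comp Primrec.fst))
            (Primrec.snd.comp (Primrec.snd.comp Primrec.fst))))).to₂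
  have inner1 : Primrec (fun p : ℕ × ℕ × List ℕ =>
      Nat.casesOn (motive := fun _ => List ℕ) p.2.1 ((p.1+1) :: p.2.2) (fun m' =>
        Nat.casesOn (motive := fun _ => List ℕ) p.1 (1 :: m' :: p.2.2)
          (fun n' => n' :: (m'+1) :: m' :: p.2.2))) := by
    apply Primrec.nat_casesOn (Primrec.fst.comp Primrec.snd)
    · exact Primrec.list_cons.comp (Primrec.succ.comp Primrec.fst) (Primrec.snd.comp Primrec.snd)
    · exact (inner2.comp (Primrec.pair (Primrec.fst.comp Primrec.fst)
        (Primrec.pair Primrec.snd (Primrec.snd.comp (Primrec.snd.comp Primrec.fst))))).to₂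
  have h1 : Primrec (fun q : ℕ × List ℕ =>
      List.casesOn (motive := fun _ => List ℕ) q.2 [q.1] (fun m t =>
        Nat.casesOn (motive := fun _ => List ℕ) m ((q.1+1) :: t) (fun m' =>
          Nat.casesOn (motive := fun _ => List ℕ) q.1 (1 :: m' :: t)
            (fun n' => n' :: (m'+1) :: m' :: t)))) := by
    exact Primrec.list_casesOn
      (h := fun (q : ℕ × List ℕ) (p : ℕ × List ℕ) =>
        Nat.casesOn (motive := fun _ => List ℕ) p.1 ((q.1+1) :: p.2) (fun m' =>
          Nat.casesOn (motive := fun _ => List ℕ) q.1 (1 :: m' :: p.2)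
            (fun n' => n' :: (m'+1) :: m' :: p.2)))
      Primrec.snd
      (Primrec.list_cons.comp Primrec.fst (Primrec.const []))
      ((inner1.comp (Primrec.pair (Primrec.fst.comp Primrec.fst)
        (Primrec.pair (Primrec.fst.comp Primrec.snd) (Primrec.snd.comp Primrec.snd)))).to₂)
  have h0 : Primrec (fun l : List ℕ =>
      List.casesOn (motive := fun _ => List ℕ) l [] (fun n t1 =>
        List.casesOn (motive := fun _ => List ℕ) t1 [n] (fun m t =>
          Nat.casesOn (motive := fun _ => List ℕ) m ((n+1) :: t) (fun m' =>
            Nat.casesOn (motive := fun _ => List ℕ) n (1 :: m' :: t)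
              (fun n' => n' :: (m'+1) :: m' :: t))))) := by
    exact Primrec.list_casesOn
      (h := fun (l : List ℕ) (p : ℕ × List ℕ) =>
        List.casesOn (motive := fun _ => List ℕ) p.2 [p.1] (fun m t =>
          Nat.casesOn (motive := fun _ => List ℕ) m ((p.1+1) :: t) (fun m' =>
            Nat.casesOn (motive := fun _ => List ℕ) p.1 (1 :: m' :: t)
              (fun n' => n' :: (m'+1) :: m' :: t))))
      Primrec.id (Primrec.const ([] : List ℕ)) ((h1.comp Primrec.snd).to₂)
  exact h0.of_eq (fun l => rfl)

lemma ackSteps : ∀ m n t, ∃ k, ackStep^[k] (n :: m :: t) = (ack m n) :: t := by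
  intro m
  induction m with
  | zero =>
    intro n t
    exact ⟨1, by simp [ackStep_zero, ack_zero]⟩
  | succ m ihm =>
    intro n
    induction n with
    | zero =>
      intro t
      obtain ⟨k, hk⟩ := ihm 1 t
      refine ⟨k + 1, ?_⟩
      rw [Function.iterate_add_apply]
      simp only [Function.iterate_one, ackStep_succ_zero]
      rw [hk, ack_succ_zero]
    | succ n ihn =>
      intro t
      obtain ⟨k1, hk1⟩ := ihn (m :: t)
      obtain ⟨k2, hk2⟩ := ihm (ack (m+1) n) t
      refine ⟨k2 + k1 + 1, ?_⟩
      rw [Function.iterate_add_apply]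
      rw [Function.iterate_add_apply]
      simp only [Function.iterate_one, ackStep_succ_succ]
      rw [hk1, hk2, ack_succ_succ]

def ackDiagOpt (x k : ℕ) : Option ℕ :=
  if (ackStep^[k] [x, x]).length = 1 then some (ackStep^[k] [x, x]).headI else none

lemma primrec_ackDiagOpt : Primrec₂ ackDiagOpt := by
  have hit : Primrec (fun p : ℕ × ℕ => ackStep^[p.2] [p.1, p.1]) := by
    apply Primrec.nat_iterate Primrec.snd
    · exact Primrec.list_cons.comp Primrec.fst
        (Primrec.list_cons.comp Primrec.fst (Primrec.const []))
    · exact (primrec_ackStep.comp Primrec.snd).to₂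
  have H : Primrec (fun p : ℕ × ℕ => ackDiagOpt p.1 p.2) := by
    unfold ackDiagOpt
    apply Primrec.ite
    · exact Primrec.eq.comp (Primrec.list_length.comp hit) (Primrec.const 1)
    · exact Primrec.option_some.comp (Primrec.list_headI.comp hit)
    · exact Primrec.const none
  exact H.to₂

lemma ackDiagOpt_mono {x : ℕ} {a : ℕ} {k k' : ℕ} (hkk : k ≤ k')
    (h : a ∈ ackDiagOpt x k) : a ∈ ackDiagOpt x k' := by
  unfold ackDiagOpt at *
  by_cases hl : (ackStep^[k] [x, x]).length = 1
  · simp only [hl, if_pos, Option.mem_def, Option.some_inj] at h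
    obtain ⟨v, hv⟩ : ∃ v, ackStep^[k] [x, x] = [v] := by
      match hll : ackStep^[k] [x, x] with
      | [v] => exact ⟨v, rfl⟩
      | [] => rw [hll] at hl; simp at hl
      | a :: b :: t => rw [hll] at hl; simp at hl
    have hfix : ackStep^[k'] [x, x] = [v] := by
      have : k' = (k' - k) + k := by omega
      rw [this, Function.iterate_add_apply, hv]
      exact Function.iterate_fixed (ackStep_single v) _
    rw [hfix]
    rw [hv] at h
    simp at h
    simp [h]
  · simp [hl] at h

lemma ack_diag_computable : Computable (fun x => ack x x) := by
  have hpart : _root_.Partrec (fun x => Nat.rfindOpt (ackDiagOpt x)) :=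
    Partrec.rfindOpt primrec_ackDiagOpt.to_comp
  apply Partrec.of_eq_tot hpart
  intro x
  rw [Nat.rfindOpt_mono (fun {a m n} h h2 => ackDiagOpt_mono h h2)]
  obtain ⟨k, hk⟩ := ackSteps x x []
  refine ⟨k, ?_⟩
  unfold ackDiagOpt
  rw [hk]
  simp

lemma primrec_lt_ack_diag {f : ℕ → ℕ} (hf : Primrec f) :
    ∃ N, ∀ x, N ≤ x → f x < ack x x := by
  obtain ⟨m, hm⟩ := exists_lt_ack_of_nat_primrec (Primrec.nat_iff.1 hf)
  exact ⟨m, fun x hx => lt_of_lt_of_le (hm x) (ack_le_ack hx (le_refl x))⟩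

end AckMachine

open Nat.Partrec (Code)
open Nat.Partrec.Code

lemma monoG {F : ℕ → ℕ} (hF : Computable F) :
    ∃ G : ℕ → ℕ, Computable G ∧ Monotone G ∧ ∀ n, F n ≤ G n := by
  refine ⟨fun s => Nat.rec (F 0) (fun n ih => max ih (F (n+1))) s, ?_, ?_, ?_⟩
  · exact Computable.nat_rec (f := @id ℕ) (g := fun _ => F 0)
      (h := fun a p => max p.2 (F (p.1+1))) Computable.id (hF.comp (Computable.const 0))
      ((Primrec.nat_max.to_comp.comp (Computable.snd.comp Computable.snd)
        (hF.comp (Computable.succ.comp (Computable.fst.comp Computable.snd)))).to₂)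
  · apply monotone_nat_of_le_succ
    intro n
    exact le_max_left _ _
  · intro s
    induction s with
    | zero => exact le_refl _
    | succ n _ => exact le_max_right _ _

theorem part2core {F : ℕ → ℕ} (hF : Computable F) :
    ∃ X : Set ℕ, PRSet X ∧ Xᶜ.Infinite ∧ ∀ n, F n ≤ penum X n := by
  classical
  obtain ⟨G, hG, Gmono, Gmaj⟩ := monoG hF
  -- code for G
  have hGpart : Nat.Partrec (fun n => Part.some (G n)) := by
    have := Partrec.nat_iff.1 (hG : Partrec (fun n => (Part.some (G n))))
    exact this
  obtain ⟨c, hc⟩ := exists_code.1 hGpart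
  have hGeval : ∀ n, G n ∈ eval c n := by
    intro n; rw [hc]; exact Part.mem_some _
  have hkex : ∀ n, ∃ k, G n ∈ evaln k c n := fun n => evaln_complete.1 (hGeval n)
  let kf : ℕ → ℕ := fun n => Nat.find (hkex n)
  have hkf : ∀ n, G n ∈ evaln (kf n) c n := fun n => Nat.find_spec (hkex n)
  -- the condition
  let p : ℕ → Prop := fun s =>
    evaln s.unpair.2.unpair.1 c s.unpair.1 = some s.unpair.2.unpair.2 ∧
    evaln (s.unpair.2.unpair.1 - 1) c s.unpair.1 = none
  let e : ℕ → ℕ := fun n => Nat.pair n (Nat.pair (kf n) (G n))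
  have hvalG : ∀ {k n v : ℕ}, evaln k c n = some v → v = G n := by
    intro k n v h
    have hv : v ∈ eval c n := evaln_sound (Option.mem_def.2 h)
    rw [hc] at hv
    exact Part.mem_some_iff.1 hv
  have he : ∀ s, p s ↔ ∃ n, e n = s := by
    intro s
    constructor
    · rintro ⟨h1, h2⟩
      refine ⟨s.unpair.1, ?_⟩
      have hv : s.unpair.2.unpair.2 = G s.unpair.1 := hvalG h1
      have hk1 : 1 ≤ s.unpair.2.unpair.1 := by
        rcases Nat.eq_zero_or_pos s.unpair.2.unpair.1 with h | h
        · exfalso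
          rw [h] at h1
          have := evaln_bound (Option.mem_def.2 h1)
          omega
        · exact h
      have hkkf : s.unpair.2.unpair.1 = kf s.unpair.1 := by
        have hle : kf s.unpair.1 ≤ s.unpair.2.unpair.1 :=
          Nat.find_min' (hkex s.unpair.1) (by rw [hv] at h1; exact Option.mem_def.2 h1)
        by_contra hne
        have hlt : kf s.unpair.1 ≤ s.unpair.2.unpair.1 - 1 := by omega
        have hmem : G s.unpair.1 ∈ evaln (s.unpair.2.unpair.1 - 1) c s.unpair.1 :=
          evaln_mono hlt (hkf s.unpair.1)
        rw [h2] at hmem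
        simp at hmem
      show Nat.pair s.unpair.1 (Nat.pair (kf s.unpair.1) (G s.unpair.1)) = s
      rw [← hkkf, ← hv]
      simp [Nat.pair_unpair]
    · rintro ⟨n, rfl⟩
      have hu1 : (e n).unpair.1 = n := by simp [e]
      have hu2 : (e n).unpair.2.unpair.1 = kf n := by simp [e]
      have hu3 : (e n).unpair.2.unpair.2 = G n := by simp [e]
      refine ⟨?_, ?_⟩
      · rw [hu1, hu2, hu3]
        exact Option.mem_def.1 (hkf n)
      · rw [hu1, hu2]
        rcases Nat.eq_zero_or_pos (kf n) with h | h
        · exfalso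
          have := evaln_bound (h ▸ hkf n)
          omega
        · cases hh : evaln (kf n - 1) c n with
          | none => rfl
          | some v =>
            exfalso
            have hlt : kf n - 1 < kf n := by omega
            have hv : v = G n := hvalG hh
            rw [hv] at hh
            exact Nat.find_min (hkex n) hlt (Option.mem_def.2 hh)
  -- primitive recursiveness of p
  have hn1 : Primrec (fun s : ℕ => s.unpair.1) := Primrec.fst.comp Primrec.unpair
  have hk1 : Primrec (fun s : ℕ => s.unpair.2.unpair.1) :=
    Primrec.fst.comp (Primrec.unpair.comp (Primrec.snd.comp Primrec.unpair))
  have hv1 : Primrec (fun s : ℕ => s.unpair.2.unpair.2) :=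
    Primrec.snd.comp (Primrec.unpair.comp (Primrec.snd.comp Primrec.unpair))
  have hE1 : Primrec (fun s : ℕ => evaln s.unpair.2.unpair.1 c s.unpair.1) :=
    primrec_evaln.comp ((hk1.pair (Primrec.const c)).pair hn1)
  have hE2 : Primrec (fun s : ℕ => evaln (s.unpair.2.unpair.1 - 1) c s.unpair.1) :=
    primrec_evaln.comp (((Primrec.nat_sub.comp hk1 (Primrec.const 1)).pair
      (Primrec.const c)).pair hn1)
  have hp : PrimrecPred p := by
    apply PrimrecPred.and
    · exact Primrec.eq.comp hE1 (Primrec.option_some.comp hv1)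
    · exact Primrec.eq.comp hE2 (Primrec.const none)
  refine ⟨{s | ¬ p s}, ⟨fun s => decide (¬ p s), hp.not.decide, fun n => by simp⟩, ?_, ?_⟩
  case refine_1 =>
    have : {s | ¬ p s}ᶜ = Set.range e := by
      ext s
      simp only [Set.mem_compl_iff, Set.mem_setOf_eq, not_not, Set.mem_range]
      exact he s
    rw [this]
    apply Set.infinite_range_of_injective
    intro a b hab
    have : (e a).unpair.1 = (e b).unpair.1 := by rw [hab]
    simpa [e] using this
  case refine_2 =>
    intro n
    set X : Set ℕ := {s | ¬ p s} with hX
    have hmemX : ∀ s, s ∉ X ↔ p s := by intro s; simp [hX]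
    have hXc : Xᶜ.Infinite := by
      have : Xᶜ = Set.range e := by
        ext s
        simp only [hX, Set.mem_compl_iff, Set.mem_setOf_eq, not_not, Set.mem_range]
        exact he s
      rw [this]
      apply Set.infinite_range_of_injective
      intro a b hab
      have : (e a).unpair.1 = (e b).unpair.1 := by rw [hab]
      simpa [e] using this
    have hq : {k | k ∉ X}.Infinite := hXc
    have hrep : ∀ s, s ∉ X → e s.unpair.1 = s := by
      intro s hs
      obtain ⟨a, ha⟩ := (he s).1 ((hmemX s).1 hs)
      have : (e a).unpair.1 = s.unpair.1 := by rw [ha]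
      simp only [e, Nat.unpair_pair] at this
      rw [← this, ← ha]
    set q : ℕ → Prop := fun k => k ∉ X with hqdef
    have hqi : (setOf q).Infinite := hq
    set T := (Finset.range (n+1)).image (fun i => (Nat.nth q i).unpair.1) with hT
    have hcard : T.card = n + 1 := by
      rw [hT, Finset.card_image_of_injOn, Finset.card_range]
      intro i _ j _ hij
      have h1 : Nat.nth q i ∉ X := Nat.nth_mem_of_infinite hqi i
      have h2 : Nat.nth q j ∉ X := Nat.nth_mem_of_infinite hqi j
      simp only at hij
      have : Nat.nth q i = Nat.nth q j := by
        rw [← hrep _ h1, ← hrep _ h2, hij]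
      exact Nat.nth_injective hqi this
    obtain ⟨m, hmT, hnm⟩ : ∃ m ∈ T, n ≤ m := by
      by_contra hcon
      push_neg at hcon
      have : T ⊆ Finset.range n := by
        intro x hx
        exact Finset.mem_range.2 (hcon x hx)
      have := Finset.card_le_card this
      rw [hcard, Finset.card_range] at this
      omega
    rw [hT, Finset.mem_image] at hmT
    obtain ⟨i, hi, him⟩ := hmT
    rw [Finset.mem_range, Nat.lt_succ_iff] at hi
    have hnth : Nat.nth q i ∉ X := Nat.nth_mem_of_infinite hqi i
    have heq : e m = Nat.nth q i := by rw [← him]; exact hrep _ hnth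
    calc F n ≤ G n := Gmaj n
    _ ≤ G m := Gmono hnm
    _ ≤ Nat.pair (kf m) (G m) := Nat.right_le_pair _ _
    _ ≤ e m := Nat.right_le_pair _ _
    _ = Nat.nth q i := heq
    _ ≤ Nat.nth q n := Nat.nth_monotone hqi hi

lemma foldr_find {q : ℕ → Bool} (hu : ∀ x y, q x = true → q y = true → x = y) :
    ∀ (l : List ℕ) (a : ℕ),
      (l.foldr (fun j acc => if q j then some j else acc) none = some a) ↔ (a ∈ l ∧ q a = true) := by
  intro l
  induction l with
  | nil => intro a; simp
  | cons b l ih =>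
    intro a
    by_cases hb : q b = true
    · simp only [List.foldr_cons, hb, if_true, List.mem_cons]
      constructor
      · rintro h
        have : b = a := by simpa using h
        subst this
        exact ⟨Or.inl rfl, hb⟩
      · rintro ⟨h1, h2⟩
        have : a = b := hu a b h2 hb
        subst this
        rfl
    · simp only [List.foldr_cons, hb, Bool.false_eq_true, if_false, List.mem_cons]
      rw [ih a]
      constructor
      · rintro ⟨h1, h2⟩
        exact ⟨Or.inr h1, h2⟩
      · rintro ⟨h1 | h1, h2⟩
        · subst h1; exact absurd h2 hb
        · exact ⟨h1, h2⟩

lemma penum_computable {Y : Set ℕ} (hY : PRSet Y) (hYc : Yᶜ.Infinite) :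
    Computable (penum Y) := by
  obtain ⟨cz, hcz, hczeq⟩ := primrec_zc hY
  obtain ⟨χ, hχ, hiff⟩ := hY
  set cond : ℕ → ℕ → Bool := fun n j => (cz j == n + 1) && !(χ j) with hcond
  have hcondiff : ∀ n j, cond n j = true ↔ j = penum Y n := by
    intro n j
    rw [hcond]
    simp only [Bool.and_eq_true, beq_iff_eq, Bool.not_eq_true']
    constructor
    · rintro ⟨h1, h2⟩
      have hj : j ∉ Y := fun hmem => by rw [(hiff j).1 hmem] at h2; simp at h2
      have := penum_zc hj
      rw [hczeq] at h1
      rw [h1] at this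
      simpa using this.symm
    · rintro rfl
      refine ⟨by rw [hczeq]; exact zc_penum hYc n, ?_⟩
      have := penum_not_mem hYc n
      cases h2 : χ (penum Y n)
      · rfl
      · exact absurd ((hiff _).2 h2) this
  have hcondprim : Primrec₂ cond := by
    have : Primrec (fun p : ℕ × ℕ => (cz p.2 == p.1 + 1) && !(χ p.2)) := by
      apply Primrec.and.comp
      · exact Primrec.beq.comp (hcz.comp Primrec.snd) (Primrec.succ.comp Primrec.fst)
      · exact Primrec.not.comp (hχ.comp Primrec.snd)
    exact this.to₂
  set g : ℕ → ℕ → Option ℕ :=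
    fun n k => (List.range (k+1)).foldr (fun j acc => if cond n j then some j else acc) none
    with hg
  have hmemg : ∀ n k a, a ∈ g n k ↔ (a ∈ List.range (k+1) ∧ cond n a = true) := by
    intro n k a
    rw [hg]
    exact foldr_find (fun x y hx hy => by
      rw [hcondiff n x] at hx; rw [hcondiff n y] at hy; rw [hx, hy]) _ a
  have hgprim : Primrec₂ g := by
    have : Primrec (fun p : ℕ × ℕ =>
        (List.range (p.2+1)).foldr (fun j acc => if cond p.1 j then some j else acc) none) := by
      apply Primrec.list_foldr
        (h := fun (p : ℕ × ℕ) (bq : ℕ × Option ℕ) => if cond p.1 bq.1 then some bq.1 else bq.2)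
      · exact Primrec.list_range.comp (Primrec.succ.comp Primrec.snd)
      · exact Primrec.const none
      · have hh : Primrec (fun r : (ℕ × ℕ) × (ℕ × Option ℕ) =>
            if cond r.1.1 r.2.1 = true then some r.2.1 else r.2.2) := by
          apply Primrec.ite
          · exact (Primrec.eq.comp
              (hcondprim.comp (Primrec.fst.comp Primrec.fst) (Primrec.fst.comp Primrec.snd))
              (Primrec.const true))
          · exact Primrec.option_some.comp (Primrec.fst.comp Primrec.snd)
          · exact Primrec.snd.comp Primrec.snd
        exact hh.to₂
    exact this.to₂
  have hpart : Partrec (fun n => Nat.rfindOpt (g n)) := Partrec.rfindOpt hgprim.to_comp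
  apply Partrec.of_eq_tot hpart
  intro n
  rw [Nat.rfindOpt_mono]
  · refine ⟨penum Y n, ?_⟩
    rw [hmemg]
    exact ⟨List.mem_range.2 (Nat.lt_succ_self _), (hcondiff n _).2 rfl⟩
  · intro a m k hmk ha
    rw [hmemg] at ha ⊢
    refine ⟨List.mem_range.2 ?_, ha.2⟩
    have := List.mem_range.1 ha.1
    omega

theorem stmt_17 :
    (∀ Y : Set ℕ, PRSet Y → Yᶜ.Infinite →
      ∃ X : Set ℕ, PRSet X ∧ Xᶜ.Infinite ∧
        PrRed (REq X) (REq Y) ∧ ¬ PrRed (REq Y) (REq X) ∧ ¬ DiamondProp X Y) ∧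
    (∀ F : ℕ → ℕ, Computable F →
      ∃ X : Set ℕ, PRSet X ∧ Xᶜ.Infinite ∧ ∀ n, F n ≤ penum X n) := by
  constructor
  swap
  · exact fun F hF => part2core hF
  intro Y hYpr hYc
  classical
  have hpY : Computable (penum Y) := penum_computable hYpr hYc
  have hpYmono : Monotone (penum Y) := Nat.nth_monotone hYc
  set G : ℕ → ℕ := fun n => ack (penum Y (n+3)) (penum Y (n+3)) with hGdef
  have hGcomp : Computable G := by
    apply ack_diag_computable.comp
    exact hpY.comp (Primrec.to_comp (Primrec.succ.comp (Primrec.succ.comp Primrec.succ)))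
  have hGmono : Monotone G := by
    intro a b hab
    exact ack_le_ack (hpYmono (by omega)) (hpYmono (by omega))
  obtain ⟨Z, hZpr, hZc, hZ⟩ := part2core hGcomp
  -- the set S and X
  set S : Set ℕ := {s | s ∉ Y ∧ (zc Y s - 1) ∉ Z} with hSdef
  set X : Set ℕ := Sᶜ with hXdef
  have hXc : Xᶜ = S := compl_compl S
  have hmemX : ∀ s, s ∈ X ↔ s ∉ S := fun s => Iff.rfl
  -- basic representation facts
  have hSrep : ∀ s ∈ S, penum Y (zc Y s - 1) = s := by
    intro s hs
    exact penum_zc hs.1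
  have hSof : ∀ m, m ∉ Z → penum Y m ∈ S := by
    intro m hm
    refine ⟨penum_not_mem hYc m, ?_⟩
    rw [zc_penum hYc m]
    simpa using hm
  have hkey : ∀ m, m ∉ Z → G (zc Z m - 1) ≤ m := by
    intro m hm
    have h1 : penum Z (zc Z m - 1) = m := penum_zc hm
    calc G (zc Z m - 1) ≤ penum Z (zc Z m - 1) := hZ _
    _ = m := h1
  -- characteristic functions
  obtain ⟨χY, hχY, hiffY⟩ := hYpr
  obtain ⟨χZ, hχZ, hiffZ⟩ := hZpr
  obtain ⟨cY, hcY, hcYeq⟩ := primrec_zc ⟨χY, hχY, hiffY⟩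
  have hnotY : ∀ s, s ∉ Y ↔ χY s = false := by
    intro s
    rw [hiffY s]
    simp
  have hnotZ : ∀ s, s ∉ Z ↔ χZ s = false := by
    intro s
    rw [hiffZ s]
    simp
  set χS : ℕ → Bool := fun s => (!χY s) && (!χZ (cY s - 1)) with hχSdef
  have hχSprim : Primrec χS := by
    apply Primrec.and.comp
    · exact Primrec.not.comp hχY
    · exact Primrec.not.comp (hχZ.comp (Primrec.nat_sub.comp hcY (Primrec.const 1)))
  have hiffS : ∀ s, s ∈ S ↔ χS s = true := by
    intro s
    rw [hχSdef]
    simp only [Bool.and_eq_true, Bool.not_eq_true']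
    rw [hSdef]
    simp only [Set.mem_setOf_eq]
    rw [hnotY s, hnotZ (zc Y s - 1), hcYeq]
  have hPRX : PRSet X := by
    refine ⟨fun s => !χS s, Primrec.not.comp hχSprim, fun s => ?_⟩
    rw [hmemX s]
    simp only [Bool.not_eq_true']
    constructor
    · intro h
      cases h2 : χS s
      · rfl
      · exact absurd ((hiffS s).2 h2) h
    · intro h h2
      rw [(hiffS s).1 h2] at h
      simp at h
  have hXcinf : Xᶜ.Infinite := by
    rw [hXc]
    have himg : ((penum Y) '' Zᶜ).Infinite := by
      apply Set.Infinite.image ?_ hZc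
      intro a _ b _ hab
      exact Nat.nth_injective hYc hab
    apply Set.Infinite.mono ?_ himg
    rintro s ⟨m, hm, rfl⟩
    exact hSof m hm
  -- the (★) property
  have star : ∀ h : ℕ → ℕ, Primrec h → ∃ s₀, ∀ s, s₀ ≤ s → 2 + zc X (h s) < zc Y s := by
    intro h hprim
    obtain ⟨g, hgprim, gmono, gmaj⟩ := exists_mono_majorant hprim
    obtain ⟨N, hN⟩ := primrec_lt_ack_diag hgprim
    refine ⟨penum Y (N + 4), fun s hs => ?_⟩
    have hb : N + 5 ≤ zc Y s := zc_large hYc hs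
    set b := zc Y s with hbdef
    suffices hzc : zc X (h s) ≤ b - 3 by omega
    rw [← Finset.card_range (b - 3), zc_eq_card]
    apply Finset.card_le_card_of_injOn (fun t => zc Z (zc Y t - 1) - 1)
    · intro t ht
      simp only [Finset.mem_coe, Finset.mem_filter, Finset.mem_range, Nat.lt_succ_iff] at ht
      obtain ⟨hts, htX⟩ := ht
      have htS : t ∈ S := by rwa [hmemX, not_not] at htX
      have hmZ : (zc Y t - 1) ∉ Z := htS.2
      set m := zc Y t - 1 with hmdef
      set j := zc Z m - 1 with hjdef
      rw [Finset.mem_coe, Finset.mem_range]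
      by_contra hcon
      push_neg at hcon
      -- j ≥ b - 3 leads to contradiction
      have c1 : h s ≤ g s := gmaj s
      have c2 : g s ≤ g (penum Y b) := gmono (le_of_lt (lt_penum_zc hYc s))
      have c3 : g (penum Y b) < ack (penum Y b) (penum Y b) := by
        apply hN
        have := le_penum hYc b
        omega
      have c4 : ack (penum Y b) (penum Y b) = G (b - 3) := by
        simp only [hGdef]
        rw [show b - 3 + 3 = b from by omega]
      have c5 : G (b - 3) ≤ G j := hGmono hcon
      have c6 : G j ≤ m := hkey m hmZ
      have c7 : m ≤ t := by
        calc m ≤ penum Y m := le_penum hYc m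
        _ = t := hSrep t htS
      omega
    · intro t ht t' ht' heq
      simp only [Finset.mem_coe, Finset.mem_filter, Finset.mem_range, Nat.lt_succ_iff] at ht ht'
      have htS : t ∈ S := by have := ht.2; rwa [hmemX, not_not] at this
      have htS' : t' ∈ S := by have := ht'.2; rwa [hmemX, not_not] at this
      simp only at heq
      have hm : penum Z (zc Z (zc Y t - 1) - 1) = zc Y t - 1 := penum_zc htS.2
      have hm' : penum Z (zc Z (zc Y t' - 1) - 1) = zc Y t' - 1 := penum_zc htS'.2
      have : zc Y t - 1 = zc Y t' - 1 := by rw [← hm, ← hm', heq]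
      calc t = penum Y (zc Y t - 1) := (hSrep t htS).symm
      _ = penum Y (zc Y t' - 1) := by rw [this]
      _ = t' := hSrep t' htS'
  refine ⟨X, hPRX, hXcinf, ?_, ?_, ?_⟩
  · -- PrRed (REq X) (REq Y)
    set c0 : ℕ := penum Y 0 with hc0def
    have hc0S : c0 ∉ S := by
      intro hc0
      have h0 : zc Y c0 - 1 = 0 := by rw [hc0def, zc_penum hYc 0]
      have : (0:ℕ) ∉ Z := by rw [← h0]; exact hc0.2
      have := hkey 0 this
      have hpos : 0 < G (zc Z 0 - 1) := ack_pos _ _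
      omega
    refine ⟨fun t => bif χS t then t else c0, ?_, ?_⟩
    · exact Primrec.cond hχSprim Primrec.id (Primrec.const c0)
    · intro x y
      change REq X x y ↔ REq Y (bif χS x then x else c0) (bif χS y then y else c0)
      by_cases hx : x ∈ S <;> by_cases hy : y ∈ S
      · -- both in S
        have hfx : (bif χS x then x else c0) = x := by rw [(hiffS x).1 hx]; rfl
        have hfy : (bif χS y then y else c0) = y := by rw [(hiffS y).1 hy]; rfl
        rw [hfx, hfy]
        unfold REq
        have hxX : x ∉ X := by rw [hmemX, not_not]; exact hx
        have hxY : x ∉ Y := hx.1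
        constructor
        · rintro (⟨h1, _⟩ | h1)
          · exact absurd h1 hxX
          · exact Or.inr h1
        · rintro (⟨h1, _⟩ | h1)
          · exact absurd h1 hxY
          · exact Or.inr h1
      · have hfx : (bif χS x then x else c0) = x := by rw [(hiffS x).1 hx]; rfl
        have hfy : (bif χS y then y else c0) = c0 := by
          have : χS y = false := by
            cases h2 : χS y
            · rfl
            · exact absurd ((hiffS y).2 h2) hy
          rw [this]; rfl
        rw [hfx, hfy]
        unfold REq
        have hxX : x ∉ X := by rw [hmemX, not_not]; exact hx
        have hxY : x ∉ Y := hx.1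
        have hxy : x ≠ y := fun hh => hy (hh ▸ hx)
        have hxc0 : x ≠ c0 := fun hh => hc0S (hh ▸ hx)
        constructor
        · rintro (⟨h1, _⟩ | h1)
          · exact absurd h1 hxX
          · exact absurd h1 hxy
        · rintro (⟨h1, _⟩ | h1)
          · exact absurd h1 hxY
          · exact absurd h1 hxc0
      · have hfy : (bif χS y then y else c0) = y := by rw [(hiffS y).1 hy]; rfl
        have hfx : (bif χS x then x else c0) = c0 := by
          have : χS x = false := by
            cases h2 : χS x
            · rfl
            · exact absurd ((hiffS x).2 h2) hx
          rw [this]; rfl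
        rw [hfx, hfy]
        unfold REq
        have hyX : y ∉ X := by rw [hmemX, not_not]; exact hy
        have hyY : y ∉ Y := hy.1
        have hxy : x ≠ y := fun hh => hx (hh ▸ hy)
        have hc0y : c0 ≠ y := fun hh => hc0S (hh ▸ hy)
        constructor
        · rintro (⟨_, h1⟩ | h1)
          · exact absurd h1 hyX
          · exact absurd h1 hxy
        · rintro (⟨_, h1⟩ | h1)
          · exact absurd h1 hyY
          · exact absurd h1 hc0y
      · have hfx : (bif χS x then x else c0) = c0 := by
          have : χS x = false := by
            cases h2 : χS x
            · rfl
            · exact absurd ((hiffS x).2 h2) hx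
          rw [this]; rfl
        have hfy : (bif χS y then y else c0) = c0 := by
          have : χS y = false := by
            cases h2 : χS y
            · rfl
            · exact absurd ((hiffS y).2 h2) hy
          rw [this]; rfl
        rw [hfx, hfy]
        unfold REq
        have hxX : x ∈ X := by rw [hmemX]; exact hx
        have hyX : y ∈ X := by rw [hmemX]; exact hy
        constructor
        · intro _; exact Or.inr rfl
        · intro _; exact Or.inl ⟨hxX, hyX⟩
  · -- ¬ PrRed (REq Y) (REq X)
    intro hred
    obtain ⟨h, hprim, hmono, hbound⟩ := claimA hred
    obtain ⟨s₀, hs₀⟩ := star h hprim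
    have h1 := hs₀ s₀ (le_refl _)
    have h2 := hbound s₀
    omega
  · -- ¬ DiamondProp X Y
    rintro ⟨X', Y', hX'pr, hY'pr, hXX, hYY, hdia⟩
    obtain ⟨h1, h1prim, h1mono, h1bound⟩ := claimA hXX.1
    obtain ⟨h4, h4prim, h4mono, h4bound⟩ := claimA hYY.2
    obtain ⟨s₀, hs₀⟩ := star (fun s => h1 (h4 (s+1)))
      (h1prim.comp (h4prim.comp Primrec.succ))
    have h4unb : ∀ C, ∃ u, C ≤ h4 u := by
      intro C
      refine ⟨penum Y (C + 3), ?_⟩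
      have e1 : zc Y (penum Y (C+3)) = C + 4 := zc_penum hYc _
      have e2 := h4bound (penum Y (C+3))
      have e3 : zc Y' (h4 (penum Y (C+3))) ≤ h4 (penum Y (C+3)) + 1 := zc_le _ _
      omega
    obtain ⟨t, ht1, ht2⟩ := hdia (h4 (s₀+1))
    obtain ⟨u₀, hu₀⟩ := h4unb (t+1)
    set B := max u₀ (s₀+1) with hBdef
    set P : ℕ → Prop := fun u => h4 u ≤ t with hPdef
    have hP1 : P (s₀+1) := ht1
    have hsB : s₀ + 1 ≤ B := le_max_right _ _
    set s := Nat.findGreatest P B with hsdef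
    have hss : s₀ + 1 ≤ s := Nat.le_findGreatest hsB hP1
    have hPs : P s := Nat.findGreatest_spec hsB hP1
    have hsltB : s < B := by
      rcases Nat.lt_or_ge s B with h | h
      · exact h
      · exfalso
        have hsB2 : s ≤ B := Nat.findGreatest_le B
        have : s = B := by omega
        have : h4 B ≤ t := by rw [← this]; exact hPs
        have : t + 1 ≤ h4 B := le_trans hu₀ (h4mono (le_max_left _ _))
        omega
    have hnot : ¬ P (s+1) := by
      apply Nat.findGreatest_is_greatest (n := B) <;> omega
    have htlt : t < h4 (s+1) := by
      rw [hPdef] at hnot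
      simp only [not_le] at hnot
      exact hnot
    have d1 : zc Y s ≤ zc Y' (h4 s) + 1 := h4bound s
    have d2 : zc Y' (h4 s) ≤ zc Y' t := zc_mono Y' hPs
    have d3 : zc X' t = zc Y' t := ht2
    have d4 : zc X' t ≤ zc X (h1 t) + 1 := h1bound t
    have d5 : zc X (h1 t) ≤ zc X (h1 (h4 (s+1))) := zc_mono X (h1mono (by omega))
    have d6 := hs₀ s (by omega)
    omega
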